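/- Let m = 6j−1 be prime. Then m divides p(n,3) if and only if n is congruent modulo 6m to one of ±0, ±1, ±2, ±(2m−2), ±(2m+1). -/

import Mathlib

open Finset

/-- The set of partitions of `n` into exactly 3 positive parts, as triples
`(a, b, c)` with `a ≥ b ≥ c ≥ 1` and `a + b + c = n`. -/
def P3 (n : ℕ) : Finset (ℕ × ℕ × ℕ) :=
  (Finset.range (n+1) ×ˢ Finset.range (n+1) ×ˢ Finset.range (n+1)).filter
    (fun t => t.2.1 ≤ t.1 ∧ t.2.2 ≤ t.2.1 ∧ 1 ≤ t.2.2 ∧ t.1 + t.2.1 + t.2.2 = n)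

/-- `p3 n` is the number of partitions of `n` into exactly 3 positive parts. -/
def p3 (n : ℕ) : ℕ := (P3 n).card

lemma mem_P3 (n : ℕ) (t : ℕ × ℕ × ℕ) :
    t ∈ P3 n ↔ t.2.1 ≤ t.1 ∧ t.2.2 ≤ t.2.1 ∧ 1 ≤ t.2.2 ∧ t.1 + t.2.1 + t.2.2 = n := by
  simp only [P3, Finset.mem_filter, Finset.mem_product, Finset.mem_range]
  constructor
  · tauto
  · intro h; refine ⟨⟨?_, ?_, ?_⟩, h⟩ <;> omega

lemma rec3 (n : ℕ) : p3 (n+3) = p3 n + (n+2)/2 := by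
  classical
  have hsplit := Finset.card_filter_add_card_filter_not
    (s := P3 (n+3)) (p := fun t => t.2.2 = 1)
  have hIcc : (Finset.Icc 1 ((n+2)/2)).card = (n+2)/2 := by simp
  have h1 : ((P3 (n+3)).filter (fun t => t.2.2 = 1)).card = (n+2)/2 := by
    rw [← hIcc]
    refine Finset.card_nbij' (fun t => t.2.1) (fun b => (n+2-b, b, 1)) ?_ ?_ ?_ ?_
    · intro t ht
      simp only [Finset.mem_coe, Finset.mem_filter, mem_P3] at ht
      simp only [Finset.mem_coe, Finset.mem_Icc]
      omega
    · intro b hb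
      simp only [Finset.mem_coe, Finset.mem_Icc] at hb
      simp only [Finset.mem_coe, Finset.mem_filter, mem_P3]
      refine ⟨?_, ?_⟩ <;> simp <;> omega
    · intro t ht
      simp only [Finset.mem_coe, Finset.mem_filter, mem_P3] at ht
      obtain ⟨a, b, c⟩ := t
      simp only [Prod.mk.injEq, and_true, true_and] at *
      omega
    · intro b hb; rfl
  have h2 : ((P3 (n+3)).filter (fun t => ¬ t.2.2 = 1)).card = p3 n := by
    unfold p3
    refine Finset.card_nbij' (fun t => (t.1 - 1, t.2.1 - 1, t.2.2 - 1))
      (fun t => (t.1 + 1, t.2.1 + 1, t.2.2 + 1)) ?_ ?_ ?_ ?_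
    · intro t ht
      simp only [Finset.mem_coe, Finset.mem_filter, mem_P3] at ht
      simp only [Finset.mem_coe, mem_P3]
      omega
    · intro t ht
      simp only [Finset.mem_coe, mem_P3] at ht
      simp only [Finset.mem_coe, Finset.mem_filter, mem_P3]
      refine ⟨?_, ?_⟩ <;> simp <;> omega
    · intro t ht
      simp only [Finset.mem_coe, Finset.mem_filter, mem_P3] at ht
      obtain ⟨a, b, c⟩ := t
      simp only [Prod.mk.injEq, and_true, true_and] at *
      omega
    · intro t ht
      simp only [Finset.mem_coe, mem_P3] at ht
      obtain ⟨a, b, c⟩ := t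
      simp only [Prod.mk.injEq, and_true, true_and] at *
      omega
  unfold p3 at *
  omega

lemma p3_eq (n : ℕ) : p3 n = (n*n + 6)/12 := by
  induction n using Nat.strong_induction_on with
  | _ n ih =>
    match n with
    | 0 => decide
    | 1 => decide
    | 2 => decide
    | (k+3) =>
      rw [rec3, ih k (by omega)]
      have h2 : (k+3)*(k+3) = k*k + 6*k + 9 := by ring
      have h3 : k*k % 12 = (k % 6)*(k % 6) % 12 := by
        conv_lhs => rw [← Nat.mod_add_div k 6]
        ring_nf
        omega
      have h4 : k % 6 < 6 := by omega
      interval_cases h : k % 6 <;> omega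

lemma no_sqrt_neg3 (m : ℕ) (hm : m.Prime) (hm6 : m % 6 = 5) (a : ZMod m) : a * a ≠ -3 := by
  haveI : Fact m.Prime := ⟨hm⟩
  intro ha
  have h5 : 5 ≤ m := by have := hm.two_le; omega
  have h2 : (2 : ZMod m) ≠ 0 := by
    have : ((2:ℕ) : ZMod m) = 0 ↔ m ∣ 2 := ZMod.natCast_eq_zero_iff 2 m
    intro h; rw [show (2 : ZMod m) = ((2:ℕ):ZMod m) by push_cast; ring] at h
    have := this.mp h
    have := Nat.le_of_dvd (by norm_num) this
    omega
  have h3 : (3 : ZMod m) ≠ 0 := by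
    have : ((3:ℕ) : ZMod m) = 0 ↔ m ∣ 3 := ZMod.natCast_eq_zero_iff 3 m
    intro h; rw [show (3 : ZMod m) = ((3:ℕ):ZMod m) by push_cast; ring] at h
    have := this.mp h
    have := Nat.le_of_dvd (by norm_num) this
    omega
  set ω : ZMod m := (a - 1) * (2 : ZMod m)⁻¹ with hω
  have h22 : (2 : ZMod m) * (2 : ZMod m)⁻¹ = 1 := mul_inv_cancel₀ h2
  have hsum : ω^2 + ω + 1 = 0 := by
    have h4 : (4 : ZMod m) * ((2:ZMod m)⁻¹ * (2:ZMod m)⁻¹) = 1 := by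
      have : (4 : ZMod m) = 2 * 2 := by norm_num
      rw [this]
      calc 2 * 2 * ((2:ZMod m)⁻¹ * (2:ZMod m)⁻¹)
          = (2 * (2:ZMod m)⁻¹) * (2 * (2:ZMod m)⁻¹) := by ring
        _ = 1 := by rw [h22]; ring
    have expand : ω^2 + ω + 1 = (a*a + 3) * ((2:ZMod m)⁻¹ * (2:ZMod m)⁻¹) := by
      rw [hω]
      have : (a - 1) * (2:ZMod m)⁻¹ * ((a-1) * (2:ZMod m)⁻¹) + (a-1)*(2:ZMod m)⁻¹ * ((2:ZMod m) * (2:ZMod m)⁻¹) + (4:ZMod m) * ((2:ZMod m)⁻¹ * (2:ZMod m)⁻¹) = (a*a+3) * ((2:ZMod m)⁻¹ * (2:ZMod m)⁻¹) := by ring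
      calc ((a-1) * (2:ZMod m)⁻¹)^2 + (a-1)*(2:ZMod m)⁻¹ + 1
          = (a - 1) * (2:ZMod m)⁻¹ * ((a-1) * (2:ZMod m)⁻¹) + (a-1)*(2:ZMod m)⁻¹ * ((2:ZMod m) * (2:ZMod m)⁻¹) + (4:ZMod m) * ((2:ZMod m)⁻¹ * (2:ZMod m)⁻¹) := by
            rw [h22, h4]; ring
        _ = (a*a+3) * ((2:ZMod m)⁻¹ * (2:ZMod m)⁻¹) := this
    rw [expand, ha]
    ring
  have hω3 : ω^3 = 1 := by
    have h0 : ω^3 - 1 = (ω - 1) * (ω^2 + ω + 1) := by ring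
    rw [hsum, mul_zero] at h0
    exact sub_eq_zero.mp h0
  have hω1 : ω ≠ 1 := by
    intro h
    rw [h] at hsum
    norm_num at hsum
    exact h3 (by linear_combination hsum)
  have hω0 : ω ≠ 0 := by
    intro h
    rw [h] at hω3
    norm_num at hω3
  have hpow : ω ^ (m - 1) = 1 := ZMod.pow_card_sub_one_eq_one hω0
  have hd3 : orderOf ω ∣ 3 := orderOf_dvd_of_pow_eq_one hω3
  have hdm : orderOf ω ∣ m - 1 := orderOf_dvd_of_pow_eq_one hpow
  rcases (Nat.prime_three.eq_one_or_self_of_dvd _ hd3) with h | h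
  · exact hω1 (orderOf_eq_one_iff.mp h)
  · rw [h] at hdm
    omega

lemma shiftK (K a b t : ℤ) (h : K ∣ a) (hab : b = a + K * t) : K ∣ b := by
  rw [hab]; exact dvd_add h ⟨t, rfl⟩

lemma cong_iff (m : ℕ) (hm : m.Prime) (hm6 : m % 6 = 5) (a b : ℤ) :
    (a : ZMod (6*m)) = (b : ZMod (6*m)) ↔ ((6:ℤ) ∣ a - b ∧ (m:ℤ) ∣ a - b) := by
  have hndvd6 : ¬ m ∣ 6 := by
    intro h
    have := Nat.le_of_dvd (by norm_num) h
    have h5 : 5 ≤ m := by have := hm.two_le; omega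
    interval_cases m <;> omega
  have hco : Nat.Coprime 6 m := (hm.coprime_iff_not_dvd.mpr hndvd6).symm
  rw [ZMod.intCast_eq_intCast_iff, Int.modEq_iff_dvd, dvd_sub_comm]
  push_cast
  constructor
  · intro h
    exact ⟨dvd_trans ⟨(m:ℤ), rfl⟩ h, dvd_trans ⟨6, mul_comm 6 (m:ℤ)⟩ h⟩
  · rintro ⟨h6, hmd⟩
    exact (Nat.Coprime.isCoprime hco).mul_dvd h6 hmd

theorem stmt4 (j m : ℕ) (hj : m = 6 * j - 1) (hm : m.Prime) (n : ℕ) :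
    m ∣ p3 n ↔
      ∃ x : ZMod (6 * m),
        (x = 0 ∨ x = 1 ∨ x = 2 ∨ x = 2 * (m : ZMod (6 * m)) - 2 ∨
          x = 2 * (m : ZMod (6 * m)) + 1) ∧
        ((n : ZMod (6 * m)) = x ∨ (n : ZMod (6 * m)) = -x) := by
  have h2le := hm.two_le
  have hm6 : m % 6 = 5 := by omega
  have h5m : 5 ≤ m := by omega
  have hKprime : Prime (m:ℤ) := Int.prime_iff_natAbs_prime.mpr (by simpa using hm)
  have hp3 : p3 n = (n*n + 6)/12 := p3_eq n
  have hsq : n*n % 12 = (n % 6)*(n % 6) % 12 := by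
    conv_lhs => rw [← Nat.mod_add_div n 6]
    ring_nf
    omega
  have hnd12 : ¬ m ∣ 12 := by
    intro h
    have h12 := Nat.le_of_dvd (by norm_num) h
    interval_cases m <;> omega
  have hdvd : m ∣ p3 n ↔ ((m:ℤ) ∣ 12 * (p3 n : ℤ)) := by
    constructor
    · intro h
      exact Dvd.dvd.mul_left (Int.natCast_dvd_natCast.mpr h) 12
    · intro h
      have h' : m ∣ 12 * p3 n := by exact_mod_cast h
      exact Nat.Coprime.dvd_of_dvd_mul_left (hm.coprime_iff_not_dvd.mpr hnd12)
        (mul_comm 12 (p3 n) ▸ h')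
  -- RHS normalization
  have hkey : ∀ v : ℤ, ((n : ZMod (6*m)) = ((v:ℤ) : ZMod (6*m))) ↔
      ((6:ℤ) ∣ (n:ℤ) - v ∧ (m:ℤ) ∣ (n:ℤ) - v) := by
    intro v
    have hcast : ((n:ℕ) : ZMod (6*m)) = (((n:ℤ) : ℤ) : ZMod (6*m)) := by
      push_cast; rfl
    rw [hcast]
    exact cong_iff m hm hm6 (n:ℤ) v
  have hkey' : ∀ v : ℤ, ((n : ZMod (6*m)) = -((v:ℤ) : ZMod (6*m))) ↔
      ((6:ℤ) ∣ (n:ℤ) + v ∧ (m:ℤ) ∣ (n:ℤ) + v) := by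
    intro v
    rw [show -((v:ℤ) : ZMod (6*m)) = (((-v : ℤ)) : ZMod (6*m)) by push_cast; ring,
      hkey (-v), sub_neg_eq_add]
  have hRHS : (∃ x : ZMod (6 * m),
        (x = 0 ∨ x = 1 ∨ x = 2 ∨ x = 2 * (m : ZMod (6 * m)) - 2 ∨
          x = 2 * (m : ZMod (6 * m)) + 1) ∧
        ((n : ZMod (6 * m)) = x ∨ (n : ZMod (6 * m)) = -x)) ↔
      (∃ v : ℤ, (v = 0 ∨ v = 1 ∨ v = 2 ∨ v = 2*(m:ℤ)-2 ∨ v = 2*(m:ℤ)+1) ∧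
        (((6:ℤ) ∣ (n:ℤ) - v ∧ (m:ℤ) ∣ (n:ℤ) - v) ∨ ((6:ℤ) ∣ (n:ℤ) + v ∧ (m:ℤ) ∣ (n:ℤ) + v))) := by
    constructor
    · rintro ⟨x, hx, hnx⟩
      have hex : ∃ v : ℤ, (v = 0 ∨ v = 1 ∨ v = 2 ∨ v = 2*(m:ℤ)-2 ∨ v = 2*(m:ℤ)+1) ∧
          x = ((v:ℤ) : ZMod (6*m)) := by
        rcases hx with h|h|h|h|h
        · exact ⟨0, Or.inl rfl, by simp [h]⟩
        · exact ⟨1, Or.inr (Or.inl rfl), by simp [h]⟩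
        · exact ⟨2, Or.inr (Or.inr (Or.inl rfl)), by simp [h]⟩
        · exact ⟨2*(m:ℤ)-2, Or.inr (Or.inr (Or.inr (Or.inl rfl))),
            by rw [h]; push_cast; ring⟩
        · exact ⟨2*(m:ℤ)+1, Or.inr (Or.inr (Or.inr (Or.inr rfl))),
            by rw [h]; push_cast; ring⟩
      obtain ⟨v, hv, hxv⟩ := hex
      rw [hxv] at hnx
      refine ⟨v, hv, ?_⟩
      rcases hnx with h|h
      · exact Or.inl ((hkey v).mp h)
      · exact Or.inr ((hkey' v).mp h)
    · rintro ⟨v, hv, h⟩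
      refine ⟨((v:ℤ) : ZMod (6*m)), ?_, ?_⟩
      · rcases hv with rfl|rfl|rfl|rfl|rfl
        · exact Or.inl (by simp)
        · exact Or.inr (Or.inl (by simp))
        · exact Or.inr (Or.inr (Or.inl (by simp)))
        · exact Or.inr (Or.inr (Or.inr (Or.inl (by push_cast; ring))))
        · exact Or.inr (Or.inr (Or.inr (Or.inr (by push_cast; ring))))
      · rcases h with h|h
        · exact Or.inl ((hkey v).mpr h)
        · exact Or.inr ((hkey' v).mpr h)
  rw [hdvd, hRHS]
  have hr : n % 6 < 6 := by omega
  have hm6Z : (m:ℤ) % 6 = 5 := by omega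
  interval_cases hr6 : n % 6
  -- case n % 6 = 0
  · have h12 : 12 * p3 n = n * n := by omega
    have heq : 12 * ((p3 n : ℕ):ℤ) = (n:ℤ) * (n:ℤ) := by exact_mod_cast h12
    rw [heq]
    constructor
    · intro h
      have hKN : (m:ℤ) ∣ (n:ℤ) := (hKprime.dvd_mul.mp h).elim id id
      exact ⟨0, Or.inl rfl, Or.inl ⟨by omega, by simpa using hKN⟩⟩
    · rintro ⟨v, rfl|rfl|rfl|rfl|rfl, ⟨h6, hKd⟩|⟨h6, hKd⟩⟩ <;>
        first
          | (exfalso; omega)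
          | (simp only [sub_zero, add_zero] at hKd; exact Dvd.dvd.mul_left hKd (n:ℤ))
  -- case n % 6 = 1
  · have h12 : 12 * p3 n + 1 = n * n := by omega
    have heq : 12 * ((p3 n : ℕ):ℤ) = (n:ℤ) * (n:ℤ) - 1 := by
      have : 12 * ((p3 n : ℕ):ℤ) + 1 = (n:ℤ) * (n:ℤ) := by exact_mod_cast h12
      linarith
    rw [heq]
    have hfac : (m:ℤ) ∣ (n:ℤ)*(n:ℤ) - 1 ↔ ((m:ℤ) ∣ (n:ℤ) - 1 ∨ (m:ℤ) ∣ (n:ℤ) + 1) := by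
      rw [show (n:ℤ)*(n:ℤ) - 1 = ((n:ℤ)-1)*((n:ℤ)+1) by ring, hKprime.dvd_mul]
    rw [hfac]
    constructor
    · rintro (h | h)
      · exact ⟨1, Or.inr (Or.inl rfl), Or.inl ⟨by omega, h⟩⟩
      · exact ⟨2*(m:ℤ)+1, Or.inr (Or.inr (Or.inr (Or.inr rfl))),
          Or.inr ⟨by omega, shiftK ((m:ℤ)) ((n:ℤ)+1) _ 2 h (by ring)⟩⟩
    · rintro ⟨v, rfl|rfl|rfl|rfl|rfl, ⟨h6, hKd⟩|⟨h6, hKd⟩⟩ <;>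
        first
          | (exfalso; omega)
          | (exact Or.inl hKd)
          | (exact Or.inr (shiftK ((m:ℤ)) _ _ (-2) hKd (by ring)))
  -- case n % 6 = 2
  · have h12 : 12 * p3 n + 4 = n * n := by omega
    have heq : 12 * ((p3 n : ℕ):ℤ) = (n:ℤ) * (n:ℤ) - 4 := by
      have : 12 * ((p3 n : ℕ):ℤ) + 4 = (n:ℤ) * (n:ℤ) := by exact_mod_cast h12
      linarith
    rw [heq]
    have hfac : (m:ℤ) ∣ (n:ℤ)*(n:ℤ) - 4 ↔ ((m:ℤ) ∣ (n:ℤ) - 2 ∨ (m:ℤ) ∣ (n:ℤ) + 2) := by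
      rw [show (n:ℤ)*(n:ℤ) - 4 = ((n:ℤ)-2)*((n:ℤ)+2) by ring, hKprime.dvd_mul]
    rw [hfac]
    constructor
    · rintro (h | h)
      · exact ⟨2, Or.inr (Or.inr (Or.inl rfl)), Or.inl ⟨by omega, h⟩⟩
      · exact ⟨2*(m:ℤ)-2, Or.inr (Or.inr (Or.inr (Or.inl rfl))),
          Or.inl ⟨by omega, shiftK ((m:ℤ)) ((n:ℤ)+2) _ (-2) h (by ring)⟩⟩
    · rintro ⟨v, rfl|rfl|rfl|rfl|rfl, ⟨h6, hKd⟩|⟨h6, hKd⟩⟩ <;>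
        first
          | (exfalso; omega)
          | (exact Or.inl hKd)
          | (exact Or.inr (shiftK ((m:ℤ)) _ _ 2 hKd (by ring)))
  -- case n % 6 = 3
  · have h12 : 12 * p3 n = n * n + 3 := by omega
    have heq : 12 * ((p3 n : ℕ):ℤ) = (n:ℤ) * (n:ℤ) + 3 := by exact_mod_cast h12
    rw [heq]
    constructor
    · intro h
      exfalso
      have hmn : m ∣ n * n + 3 := by
        have : (m:ℤ) ∣ ((n*n+3 : ℕ) : ℤ) := by push_cast; exact h
        exact_mod_cast this
      have hz : ((n*n+3 : ℕ) : ZMod m) = 0 := (ZMod.natCast_eq_zero_iff _ m).mpr hmn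
      have : ((n : ZMod m)) * (n : ZMod m) = -3 := by
        push_cast at hz
        linear_combination hz
      exact no_sqrt_neg3 m hm hm6 _ this
    · rintro ⟨v, rfl|rfl|rfl|rfl|rfl, ⟨h6, hKd⟩|⟨h6, hKd⟩⟩ <;> (exfalso; omega)
  -- case n % 6 = 4
  · have h12 : 12 * p3 n + 4 = n * n := by omega
    have heq : 12 * ((p3 n : ℕ):ℤ) = (n:ℤ) * (n:ℤ) - 4 := by
      have : 12 * ((p3 n : ℕ):ℤ) + 4 = (n:ℤ) * (n:ℤ) := by exact_mod_cast h12
      linarith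
    rw [heq]
    have hfac : (m:ℤ) ∣ (n:ℤ)*(n:ℤ) - 4 ↔ ((m:ℤ) ∣ (n:ℤ) - 2 ∨ (m:ℤ) ∣ (n:ℤ) + 2) := by
      rw [show (n:ℤ)*(n:ℤ) - 4 = ((n:ℤ)-2)*((n:ℤ)+2) by ring, hKprime.dvd_mul]
    rw [hfac]
    constructor
    · rintro (h | h)
      · exact ⟨2*(m:ℤ)-2, Or.inr (Or.inr (Or.inr (Or.inl rfl))),
          Or.inr ⟨by omega, shiftK ((m:ℤ)) ((n:ℤ)-2) _ 2 h (by ring)⟩⟩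
      · exact ⟨2, Or.inr (Or.inr (Or.inl rfl)), Or.inr ⟨by omega, h⟩⟩
    · rintro ⟨v, rfl|rfl|rfl|rfl|rfl, ⟨h6, hKd⟩|⟨h6, hKd⟩⟩ <;>
        first
          | (exfalso; omega)
          | (exact Or.inr hKd)
          | (exact Or.inl (shiftK ((m:ℤ)) _ _ (-2) hKd (by ring)))
  -- case n % 6 = 5
  · have h12 : 12 * p3 n + 1 = n * n := by omega
    have heq : 12 * ((p3 n : ℕ):ℤ) = (n:ℤ) * (n:ℤ) - 1 := by
      have : 12 * ((p3 n : ℕ):ℤ) + 1 = (n:ℤ) * (n:ℤ) := by exact_mod_cast h12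
      linarith
    rw [heq]
    have hfac : (m:ℤ) ∣ (n:ℤ)*(n:ℤ) - 1 ↔ ((m:ℤ) ∣ (n:ℤ) - 1 ∨ (m:ℤ) ∣ (n:ℤ) + 1) := by
      rw [show (n:ℤ)*(n:ℤ) - 1 = ((n:ℤ)-1)*((n:ℤ)+1) by ring, hKprime.dvd_mul]
    rw [hfac]
    constructor
    · rintro (h | h)
      · exact ⟨2*(m:ℤ)+1, Or.inr (Or.inr (Or.inr (Or.inr rfl))),
          Or.inl ⟨by omega, shiftK ((m:ℤ)) ((n:ℤ)-1) _ (-2) h (by ring)⟩⟩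
      · exact ⟨1, Or.inr (Or.inl rfl), Or.inr ⟨by omega, h⟩⟩
    · rintro ⟨v, rfl|rfl|rfl|rfl|rfl, ⟨h6, hKd⟩|⟨h6, hKd⟩⟩ <;>
        first
          | (exfalso; omega)
          | (exact Or.inr hKd)
          | (exact Or.inl (shiftK ((m:ℤ)) _ _ 2 hKd (by ring)))
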